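/- For every integer n ≥ 1, the sum F_n(f) is a rational number, i.e. there exists q ∈ ℚ with F_n(f) = q. -/

import Mathlib

open Real Filter

noncomputable section

/-- `ψ(x) = 1 − (1/L) ∑_{ℓ=1}^L cos(s_ℓ · x)`. -/
def psi (L : ℕ) (s : Fin L → ℤ × ℤ) (x y : ℝ) : ℝ :=
  1 - (1 / L) * ∑ ℓ, Real.cos ((s ℓ).1 * x + (s ℓ).2 * y)

/-- `f = 1/ψ`. -/
def f (L : ℕ) (s : Fin L → ℤ × ℤ) (x y : ℝ) : ℝ := 1 / psi L s x y

/-- `F_n(f) = ∑_{0 ≤ j,k ≤ n−1, (j,k) ≠ (0,0)} f(2πj/n, 2πk/n)`. -/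
def Fsum (L : ℕ) (s : Fin L → ℤ × ℤ) (n : ℕ) : ℝ :=
  ∑ j ∈ Finset.range n, ∑ k ∈ Finset.range n,
    if (j, k) ≠ (0, 0) then f L s (2 * π * j / n) (2 * π * k / n) else 0

/-- The exponent (in `ZMod n`) attached to direction `ℓ` and point `p`. -/
def mexp {L : ℕ} (s : Fin L → ℤ × ℤ) (n : ℕ) (ℓ : Fin L) (p : ZMod n × ZMod n) : ZMod n :=
  ((s ℓ).1 : ZMod n) * p.1 + ((s ℓ).2 : ZMod n) * p.2

/-- The algebraic analogue of `1/ψ` at a grid point, for a root of unity `μ`. -/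
def trm (L : ℕ) (s : Fin L → ℤ × ℤ) (n : ℕ) [NeZero n] {K : Type} [Field K] (μ : K)
    (p : ZMod n × ZMod n) : K :=
  (1 - (L : K)⁻¹ * ∑ ℓ, (μ ^ (mexp s n ℓ p).val + μ ^ (-(mexp s n ℓ p)).val) / 2)⁻¹

/-- The algebraic analogue of the full sum `F_n(f)`. -/
def S (L : ℕ) (s : Fin L → ℤ × ℤ) (n : ℕ) [NeZero n] {K : Type} [Field K] (μ : K) : K :=
  ∑ p : ZMod n × ZMod n, if p ≠ 0 then trm L s n μ p else 0

lemma pow_val_natCast {K : Type} [Field K] {μ : K} {n : ℕ} [NeZero n] (hμ : μ ^ n = 1)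
    (a : ℕ) : μ ^ a = μ ^ ((a : ZMod n)).val := by
  rw [ZMod.val_natCast]
  conv_lhs => rw [← Nat.div_add_mod a n]
  rw [pow_add, pow_mul, hμ, one_pow, one_mul]

lemma pow_zmod_eq {K : Type} [Field K] {μ : K} {n : ℕ} [NeZero n] (hμ : μ ^ n = 1)
    {a b : ZMod n} (h : a = b) : μ ^ a.val = μ ^ b.val := by rw [h]

lemma pow_mul_val {K : Type} [Field K] {μ : K} {n : ℕ} [NeZero n] (hμ : μ ^ n = 1)
    (c : ℕ) (m : ZMod n) : (μ ^ c) ^ m.val = μ ^ (((c : ZMod n) * m).val) := by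
  rw [← pow_mul, pow_val_natCast hμ (c * m.val)]
  congr 1
  congr 1
  push_cast
  rw [ZMod.natCast_rightInverse m]

/-- Replacing the root of unity by a coprime power does not change the sum. -/
lemma S_pow (L : ℕ) (s : Fin L → ℤ × ℤ) (n : ℕ) [NeZero n] {K : Type} [Field K] {μ : K}
    (hμ : μ ^ n = 1) {c : ℕ} (hc : c.Coprime n) :
    S L s n (μ ^ c) = S L s n μ := by
  classical
  set u : (ZMod n)ˣ := ZMod.unitOfCoprime c hc with hu
  have hucast : (u : ZMod n) = (c : ZMod n) := rfl
  have hbij : Function.Bijective (fun p : ZMod n × ZMod n => ((u : ZMod n) * p.1, (u : ZMod n) * p.2)) := by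
    apply Function.bijective_iff_has_inverse.2
    refine ⟨fun p => (((u⁻¹ : (ZMod n)ˣ) : ZMod n) * p.1, ((u⁻¹ : (ZMod n)ˣ) : ZMod n) * p.2), ?_, ?_⟩
    · intro p
      simp [← mul_assoc, ← Units.val_mul]
    · intro p
      simp [← mul_assoc, ← Units.val_mul]
  refine Fintype.sum_bijective _ hbij _ _ ?_
  intro p
  have hne : ((u : ZMod n) * p.1, (u : ZMod n) * p.2) ≠ 0 ↔ p ≠ 0 := by
    constructor
    · rintro h rfl
      simp at h
    · rintro h h'
      apply h
      have h1 : (u : ZMod n) * p.1 = 0 := congrArg Prod.fst h'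
      have h2 : (u : ZMod n) * p.2 = 0 := congrArg Prod.snd h'
      have e1 : p.1 = 0 := by
        have := congrArg (fun x => ((u⁻¹ : (ZMod n)ˣ) : ZMod n) * x) h1
        simpa [← mul_assoc, ← Units.val_mul] using this
      have e2 : p.2 = 0 := by
        have := congrArg (fun x => ((u⁻¹ : (ZMod n)ˣ) : ZMod n) * x) h2
        simpa [← mul_assoc, ← Units.val_mul] using this
      exact Prod.ext e1 e2
  by_cases hp : p ≠ 0
  · rw [if_pos hp, if_pos (hne.2 hp)]
    unfold trm
    have hsum : ∀ ℓ : Fin L,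
        ((μ ^ c) ^ (mexp s n ℓ p).val + (μ ^ c) ^ (-(mexp s n ℓ p)).val) / 2
        = (μ ^ (mexp s n ℓ ((u : ZMod n) * p.1, (u : ZMod n) * p.2)).val
            + μ ^ (-(mexp s n ℓ ((u : ZMod n) * p.1, (u : ZMod n) * p.2))).val) / 2 := by
      intro ℓ
      have hm : mexp s n ℓ ((u : ZMod n) * p.1, (u : ZMod n) * p.2)
          = (c : ZMod n) * mexp s n ℓ p := by
        unfold mexp
        simp only [hucast]
        ring
      congr 1
      congr 1
      · rw [pow_mul_val hμ c (mexp s n ℓ p)]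
        exact (pow_zmod_eq (μ := μ) hμ hm.symm)
      · rw [pow_mul_val hμ c (-(mexp s n ℓ p))]
        apply pow_zmod_eq (μ := μ) hμ
        rw [hm]
        ring
    rw [Finset.sum_congr rfl fun ℓ _ => hsum ℓ]
  · rw [if_neg hp, if_neg (fun h => hp (hne.1 h))]

lemma map_S {K K' : Type} [Field K] [Field K'] (φ : K →+* K') (L : ℕ) (s : Fin L → ℤ × ℤ)
    (n : ℕ) [NeZero n] (μ : K) : φ (S L s n μ) = S L s n (φ μ) := by
  unfold S trm
  rw [map_sum]
  apply Finset.sum_congr rfl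
  intro p _
  rw [apply_ite φ, map_zero, map_inv₀, map_sub, map_one, map_mul, map_inv₀, map_natCast, map_sum]
  simp [map_div₀, map_ofNat]

theorem zpow_eq_of_modEq {K : Type} [Field K] {μ : K} {n : ℕ} (hn : n ≠ 0) (hμ : μ ^ n = 1)
    {a b : ℤ} (h : a ≡ b [ZMOD n]) : μ ^ a = μ ^ b := by
  have hμ0 : μ ≠ 0 := by
    intro h0
    rw [h0, zero_pow hn] at hμ
    exact zero_ne_one hμ
  obtain ⟨d, hd⟩ := Int.ModEq.dvd h
  have : b = a + n * d := by linarith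
  rw [this, zpow_add₀ hμ0, zpow_mul, zpow_natCast, hμ, one_zpow, mul_one]

/-- for every `n ≥ 1`, the sum `F_n(f)` is a rational number. -/
theorem Fn_rational (L : ℕ) (hL : 2 ≤ L) (s : Fin L → ℤ × ℤ)
    (hs : ∀ ℓ, s ℓ ≠ 0)
    (h1 : s ⟨0, by omega⟩ = (1, 0)) (h2 : s ⟨1, by omega⟩ = (0, 1))
    (n : ℕ) (hn : 1 ≤ n) :
    ∃ q : ℚ, Fsum L s n = q := by
  classical
  haveI : NeZero n := ⟨by omega⟩
  have hn0 : n ≠ 0 := by omega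
  set N : ℕ+ := ⟨n, hn⟩ with hN
  set K := CyclotomicField n ℚ with hK
  haveI : IsCyclotomicExtension {n} ℚ K := by
    haveI : NeZero ((n : ℕ) : ℚ) := ⟨by exact_mod_cast hn0⟩
    exact CyclotomicField.isCyclotomicExtension (n := n) (K := ℚ)
  set μ : K := IsCyclotomicExtension.zeta n ℚ K with hμdef
  have hμ : IsPrimitiveRoot μ n := IsCyclotomicExtension.zeta_spec n ℚ K
  have hμn : μ ^ n = 1 := by
    have := hμ.pow_eq_one
    simpa using this
  -- the algebraic sum
  set x : K := S L s n μ with hx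
  -- x is fixed by the Galois group
  have hfix : ∀ σ : K ≃ₐ[ℚ] K, σ x = x := by
    intro σ
    have hσμ : IsPrimitiveRoot (σ μ) n := hμ.map_of_injective σ.injective
    obtain ⟨c, hcn, hcop, hpow⟩ := (hμ.isPrimitiveRoot_iff (ξ := σ μ)).1 hσμ
    have : σ x = S L s n (σ μ) := map_S (σ : K →+* K) L s n μ
    rw [this, ← hpow, S_pow L s n hμn hcop]
  -- hence x is rational
  haveI : FiniteDimensional ℚ K := IsCyclotomicExtension.finiteDimensional {n} ℚ K
  haveI : IsGalois ℚ K := IsCyclotomicExtension.isGalois {n} ℚ K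
  have hbot : x ∈ (⊥ : IntermediateField ℚ K) := by
    have h01 : IsGalois ℚ K ↔ IntermediateField.fixedField (⊤ : Subgroup (K ≃ₐ[ℚ] K)) = ⊥ :=
      (IsGalois.tfae (F := ℚ) (E := K)).out 0 1
    have htop : IntermediateField.fixedField (⊤ : Subgroup (K ≃ₐ[ℚ] K)) = ⊥ :=
      h01.mp inferInstance
    rw [← htop]
    intro g
    exact hfix g
  rw [IntermediateField.mem_bot] at hbot
  obtain ⟨q, hq⟩ := hbot
  refine ⟨q, ?_⟩
  -- embed into ℂ
  haveI := IsCyclotomicExtension.splitting_field_cyclotomic n ℚ K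
  set φ : K →ₐ[ℚ] ℂ :=
    Polynomial.IsSplittingField.lift K (Polynomial.cyclotomic n ℚ)
      (IsAlgClosed.splits _) with hφ
  set ζ : ℂ := Complex.exp (2 * π * Complex.I / n) with hζdef
  have hζ : IsPrimitiveRoot ζ n := Complex.isPrimitiveRoot_exp n hn0
  have hζn : ζ ^ n = 1 := hζ.pow_eq_one
  have hφμ : IsPrimitiveRoot (φ μ) n := hμ.map_of_injective φ.injective
  obtain ⟨c, hcn, hcop, hpow⟩ := (hζ.isPrimitiveRoot_iff (ξ := φ μ)).1 (by simpa using hφμ)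
  have hφx : φ x = S L s n ζ := by
    have : φ x = S L s n (φ μ) := map_S (φ : K →+* ℂ) L s n μ
    rw [this, ← hpow, S_pow L s n hζn hcop]
  -- identify S L s n ζ with Fsum
  have hS : ((Fsum L s n : ℝ) : ℂ) = S L s n ζ := by
    unfold Fsum S
    push_cast [apply_ite (fun r : ℝ => (r : ℂ))]
    rw [← Finset.sum_product']
    refine Finset.sum_nbij' (fun jk : ℕ × ℕ => ((jk.1 : ZMod n), (jk.2 : ZMod n)))
      (fun p : ZMod n × ZMod n => (p.1.val, p.2.val)) ?_ ?_ ?_ ?_ ?_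
    · intro jk _
      simp
    · intro p _
      simp [Finset.mem_product, ZMod.val_lt]
    · intro jk hjk
      simp only [Finset.mem_product, Finset.mem_range] at hjk
      simp [Prod.ext_iff, ZMod.val_natCast_of_lt hjk.1, ZMod.val_natCast_of_lt hjk.2]
    · intro p _
      simp [Prod.ext_iff, ZMod.natCast_rightInverse p.1, ZMod.natCast_rightInverse p.2]
    · intro jk hjk
      simp only [Finset.mem_product, Finset.mem_range] at hjk
      set p : ZMod n × ZMod n := ((jk.1 : ZMod n), (jk.2 : ZMod n)) with hpdef
      -- condition equivalence
      have hcond : (jk.1, jk.2) ≠ (0, 0) ↔ p ≠ 0 := by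
        constructor
        · intro h h'
          apply h
          have e1 : (jk.1 : ZMod n) = 0 := congrArg Prod.fst h'
          have e2 : (jk.2 : ZMod n) = 0 := congrArg Prod.snd h'
          rw [ZMod.natCast_eq_zero_iff] at e1 e2
          have f1 : jk.1 = 0 := Nat.eq_zero_of_dvd_of_lt e1 hjk.1
          have f2 : jk.2 = 0 := Nat.eq_zero_of_dvd_of_lt e2 hjk.2
          rw [f1, f2]
        · intro h h'
          apply h
          have e1 : jk.1 = 0 := congrArg Prod.fst h'
          have e2 : jk.2 = 0 := congrArg Prod.snd h'
          rw [hpdef, e1, e2]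
          simp [Prod.ext_iff]
      by_cases hp : p ≠ 0
      · rw [if_pos hp, if_pos (hcond.2 hp)]
        unfold trm f psi
        beta_reduce
        rw [one_div, Complex.ofReal_inv]
        have key : ∀ ℓ : Fin L,
            (ζ ^ (mexp s n ℓ p).val + ζ ^ (-(mexp s n ℓ p)).val) / 2
            = ((Real.cos ((s ℓ).1 * (2 * π * jk.1 / n) + (s ℓ).2 * (2 * π * jk.2 / n)) : ℝ) : ℂ) := by
          intro ℓ
          set a : ℤ := (s ℓ).1
          set b : ℤ := (s ℓ).2
          set m : ZMod n := mexp s n ℓ p with hm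
          set t : ℤ := a * jk.1 + b * jk.2 with ht
          have hmt : ((t : ℤ) : ZMod n) = m := by
            rw [hm, ht, hpdef]
            unfold mexp
            push_cast
            ring
          have hz1 : ζ ^ (m.val : ℤ) = ζ ^ t := by
            apply zpow_eq_of_modEq hn0 hζn
            rw [← ZMod.intCast_eq_intCast_iff]
            push_cast
            rw [ZMod.natCast_rightInverse m, hmt]
          have hz2 : ζ ^ (((-m).val : ℤ)) = ζ ^ (-t) := by
            apply zpow_eq_of_modEq hn0 hζn
            rw [← ZMod.intCast_eq_intCast_iff]
            push_cast
            rw [ZMod.natCast_rightInverse (-m), hmt]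
          have hexp : ∀ u : ℤ, ζ ^ (u : ℤ) = Complex.exp ((2 * π * u / n) * Complex.I) := by
            intro u
            rw [hζdef, ← Complex.exp_int_mul]
            congr 1
            have : (n : ℂ) ≠ 0 := by exact_mod_cast hn0
            field_simp
          have harg : ((a : ℝ) * (2 * π * jk.1 / n) + (b : ℝ) * (2 * π * jk.2 / n))
              = 2 * π * (t : ℝ) / n := by
            rw [ht]
            push_cast
            have : (n : ℝ) ≠ 0 := by exact_mod_cast hn0
            field_simp
          rw [← zpow_natCast ζ m.val, ← zpow_natCast ζ (-m).val, hz1, hz2, hexp t, hexp (-t)]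
          rw [Complex.ofReal_cos, harg]
          have eA : (2 * π * ((t : ℤ) : ℂ) / n) * Complex.I
              = ((2 * π * (t : ℝ) / n : ℝ) : ℂ) * Complex.I := by push_cast; ring
          have eB : (2 * π * (((-t : ℤ)) : ℂ) / n) * Complex.I
              = -(((2 * π * (t : ℝ) / n : ℝ)) : ℂ) * Complex.I := by push_cast; ring
          rw [eA, eB, ← Complex.two_cos]
          ring
        congr 1
        rw [Finset.sum_congr rfl fun ℓ _ => key ℓ]
        push_cast
        ring
      · rw [if_neg hp, if_neg (fun h => hp (hcond.1 h))]
  -- finish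
  have hfin : ((Fsum L s n : ℝ) : ℂ) = ((q : ℝ) : ℂ) := by
    rw [hS, ← hφx, ← hq]
    have hcom : φ (algebraMap ℚ K q) = algebraMap ℚ ℂ q := φ.commutes q
    rw [hcom, eq_ratCast (algebraMap ℚ ℂ) q]
    push_cast
    ring
  exact_mod_cast hfin

end
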